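/- Fix G : F_{2^n} → F_{2^n} with injective restriction to C_3 = {x³ : x ∈ F_{2^n}} and nonzero γ ∈ F_{2^n}. The set S = { h : F_{2^n} → F_2 | the function x ↦ G(x) + γ·h(x) is injective on C_3 } is an F_2-subspace of the space of all Boolean functions on F_{2^n} under pointwise addition. -/

import Mathlib

open Finset

theorem stmt9 (n : ℕ) (hn0 : 0 < n)
    (K : Type) [Field K] [Fintype K] [DecidableEq K]
    (hcard : Fintype.card K = 2 ^ n)
    (G : K → K) (hG : Set.InjOn G {y : K | ∃ x : K, y = x ^ 3})
    (γ : K) (hγ : γ ≠ 0) :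
    ∃ W : Submodule (ZMod 2) (K → ZMod 2),
      (W : Set (K → ZMod 2)) =
        {h : K → ZMod 2 |
          Set.InjOn (fun x : K => G x + γ * (ZMod.cast (h x) : K))
            {y : K | ∃ x : K, y = x ^ 3}} := by
  haveI hchar : CharP K 2 := by
    refine ringChar.of_eq ?_
    rw [FiniteField.even_card_iff_char_two, hcard, Nat.pow_mod]
    simp [zero_pow hn0.ne']
  set C3 : Set K := {y : K | ∃ x : K, y = x ^ 3} with hC3
  have hadd : ∀ a : K, a + a = 0 := fun a => CharTwo.add_self_eq_zero a
  have hcast_ne : ∀ a b : ZMod 2, a ≠ b →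
      (ZMod.cast a : K) + (ZMod.cast b : K) = 1 := by
    intro a b hab
    have h01 : ∀ c : ZMod 2, c = 0 ∨ c = 1 := by decide
    rcases h01 a with rfl | rfl <;> rcases h01 b with rfl | rfl <;> simp_all [ZMod.cast_one']
  refine ⟨{ carrier := {h : K → ZMod 2 | ∀ x ∈ C3, ∀ y ∈ C3, G x + G y = γ → h x = h y}
            add_mem' := ?_
            zero_mem' := ?_
            smul_mem' := ?_ }, ?_⟩
  · intro f g hf hg x hx y hy hxy
    simp only [Pi.add_apply]
    rw [hf x hx y hy hxy, hg x hx y hy hxy]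
  · intro x _ y _ _; rfl
  · intro c f hf x hx y hy hxy
    simp only [Pi.smul_apply]
    rw [hf x hx y hy hxy]
  · ext h
    simp only [SetLike.mem_coe, Set.mem_setOf_eq]
    constructor
    · -- membership in carrier implies injectivity
      intro hh x hx y hy hxy
      simp only at hxy
      by_cases heq : h x = h y
      · apply hG hx hy
        rw [heq] at hxy
        exact add_right_cancel hxy
      · exfalso
        apply heq
        apply hh x hx y hy
        have h0 : (G x + γ * (ZMod.cast (h x) : K)) + (G y + γ * (ZMod.cast (h y) : K)) = 0 := by
          rw [← CharTwo.sub_eq_add, sub_eq_zero]; exact hxy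
        have h2 : G x + G y + γ * ((ZMod.cast (h x) : K) + (ZMod.cast (h y) : K)) = 0 := by
          rw [← h0]; ring
        rw [hcast_ne _ _ heq, mul_one] at h2
        calc G x + G y = (G x + G y + γ) + γ := by rw [add_assoc, hadd, add_zero]
        _ = γ := by rw [h2, zero_add]
    · intro hinj x hx y hy hxy
      by_contra heq
      have hxyne : x ≠ y := by
        rintro rfl
        exact heq rfl
      apply hxyne
      apply hinj hx hy
      simp only
      have h1 : (ZMod.cast (h x) : K) + (ZMod.cast (h y) : K) = 1 := hcast_ne _ _ heq
      have : G x + γ * (ZMod.cast (h x) : K) + (G y + γ * (ZMod.cast (h y) : K))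
          = G x + G y + γ * ((ZMod.cast (h x) : K) + (ZMod.cast (h y) : K)) := by ring
      rw [h1, mul_one, hxy, hadd] at this
      rw [← CharTwo.sub_eq_add, sub_eq_zero] at this
      exact this
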